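/- Let u, v, a be positive integers with a odd. If the 2-adic valuation of v is at most the 2-adic valuation of u, then gcd(a^u + 1, a^v - 1) = 2. -/
import Mathlib

theorem gcd_pow_add_one_pow_sub_one_of_odd (u v a : ℕ)
    (hu : 0 < u) (hv : 0 < v) (ha : 0 < a) (haodd : Odd a)
    (hval : padicValNat 2 v ≤ padicValNat 2 u) :
    Nat.gcd (a ^ u + 1) (a ^ v - 1) = 2 := by
  set d := Nat.gcd (a ^ u + 1) (a ^ v - 1) with hd
  have h1u : 1 ≤ a ^ u := Nat.one_le_pow _ _ ha
  have h1v : 1 ≤ a ^ v := Nat.one_le_pow _ _ ha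
  have hdpos : 0 < d := Nat.gcd_pos_of_pos_left _ (by omega)
  haveI : NeZero d := ⟨hdpos.ne'⟩
  have hdu : d ∣ a ^ u + 1 := Nat.gcd_dvd_left _ _
  have hdv : d ∣ a ^ v - 1 := Nat.gcd_dvd_right _ _
  -- a^u + 1 divides a^(2u) - 1
  have h2u : d ∣ a ^ (2 * u) - 1 := by
    obtain ⟨k, hk⟩ : ∃ k, a ^ u = k + 1 := ⟨a ^ u - 1, by omega⟩
    refine hdu.trans ⟨k, ?_⟩
    have : a ^ (2 * u) = (a ^ u) ^ 2 := by rw [mul_comm, pow_mul]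
    rw [this, hk]
    have h2 : (k + 1) ^ 2 = (k + 1 + 1) * k + 1 := by ring
    omega
  -- from d ∣ a^m - 1 we get (a : ZMod d)^m = 1
  have key : ∀ m : ℕ, d ∣ a ^ m - 1 → (a : ZMod d) ^ m = 1 := by
    intro m hm
    have h1m : 1 ≤ a ^ m := Nat.one_le_pow _ _ ha
    have : ((a ^ m - 1 : ℕ) : ZMod d) = 0 := (ZMod.natCast_eq_zero_iff _ _).mpr hm
    rw [Nat.cast_sub h1m] at this
    push_cast at this
    linear_combination this
  have keyrev : ∀ m : ℕ, (a : ZMod d) ^ m = 1 → d ∣ a ^ m - 1 := by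
    intro m hm
    have h1m : 1 ≤ a ^ m := Nat.one_le_pow _ _ ha
    rw [← ZMod.natCast_eq_zero_iff, Nat.cast_sub h1m]
    push_cast
    linear_combination hm
  set g := Nat.gcd (2 * u) v with hg
  have hord : (a : ZMod d) ^ g = 1 := by
    have o1 : orderOf (a : ZMod d) ∣ 2 * u := orderOf_dvd_of_pow_eq_one (key _ h2u)
    have o2 : orderOf (a : ZMod d) ∣ v := orderOf_dvd_of_pow_eq_one (key _ hdv)
    exact orderOf_dvd_iff_pow_eq_one.mp (Nat.dvd_gcd o1 o2)
  -- g divides u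
  have hgu : g ∣ u := by
    rw [← Nat.factorization_le_iff_dvd (Nat.gcd_pos_of_pos_right _ hv).ne' hu.ne']
    intro p
    have h2u0 : 2 * u ≠ 0 := by omega
    rw [Nat.factorization_gcd h2u0 hv.ne']
    simp only [Finsupp.inf_apply]
    rcases eq_or_ne p 2 with rfl | hp
    · have e1 : (v.factorization) 2 = padicValNat 2 v := by
        rw [Nat.factorization_def _ Nat.prime_two]
      have e2 : (u.factorization) 2 = padicValNat 2 u := by
        rw [Nat.factorization_def _ Nat.prime_two]
      calc min ((2 * u).factorization 2) (v.factorization 2) ≤ v.factorization 2 :=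
            min_le_right _ _
        _ ≤ u.factorization 2 := by rw [e1, e2]; exact hval
    · have : (2 * u).factorization p = u.factorization p := by
        rw [Nat.factorization_mul (by norm_num) hu.ne', Finsupp.add_apply,
          Nat.Prime.factorization Nat.prime_two]
        simp [Finsupp.single_apply, hp.symm]
      calc min ((2 * u).factorization p) (v.factorization p) ≤ (2 * u).factorization p :=
            min_le_left _ _
        _ = u.factorization p := this
  -- hence d ∣ a^u - 1
  have hdu' : d ∣ a ^ u - 1 := by
    refine keyrev u ?_
    obtain ⟨k, hk⟩ := hgu
    rw [hk, pow_mul, hord, one_pow]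
  have hdvd2 : d ∣ 2 := by
    have := Nat.dvd_sub hdu hdu'
    have he : a ^ u + 1 - (a ^ u - 1) = 2 := by omega
    rwa [he] at this
  have h2dvd : 2 ∣ d := by
    refine Nat.dvd_gcd ?_ ?_
    · exact (haodd.pow.add_one).two_dvd
    · have : Even (a ^ v - 1) := Nat.Odd.sub_odd haodd.pow odd_one
      exact this.two_dvd
  exact Nat.dvd_antisymm hdvd2 h2dvd
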